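/- For basis elements of the Clifford algebra of the form ⁽ʲ¹⋯ʲᵖ⁾P₍kq⋯k₁₎ = (e^{j₁})⋯(e^{j_p}) P (e_{k_q})⋯(e_{k₁}), the multiplication rule holds: (⁽ʲ¹⋯ʲᵖ⁾P₍kq⋯k₁₎)·(⁽ʲ'¹⋯ʲ'ᵖ'⁾P₍k'q'⋯k'₁₎) = δ_{q,p'} · δ^{j'₁⋯j'_{p'}}_{k₁⋯k_q} · ⁽ʲ¹⋯ʲᵖ⁾P₍k'q'⋯k'₁₎, where δ^{j'₁⋯j'_{p'}}_{k₁⋯k_q} is the generalized Kronecker delta (determinant of the matrix of Kronecker deltas). -/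

import Mathlib

noncomputable section

open CliffordAlgebra

variable (F : Type*) [Field F] (V : Type*) [AddCommGroup V] [Module F V]

/-- The quadratic form `Q[v ⊕ α] = α v` on `W = V ⊕ V*`. -/
def Qf : QuadraticForm F (V × Module.Dual F V) where
  toFun w := w.2 w.1
  toFun_smul a w := by simp [smul_eq_mul, mul_assoc]
  exists_companion' :=
    ⟨LinearMap.mk₂ F (fun w w' => w.2 w'.1 + w'.2 w.1)
      (fun m m' n => by simp; ring) (fun c m n => by simp; ring)
      (fun m n n' => by simp; ring) (fun c m n => by simp; ring),
     fun w w' => by simp; ring⟩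

/-- Image of a vector `v ∈ V` in the Clifford algebra. -/
def ιv (v : V) : CliffordAlgebra (Qf F V) := ι (Qf F V) (v, 0)

/-- Image of a covector `α ∈ V*` in the Clifford algebra. -/
def ιd (α : Module.Dual F V) : CliffordAlgebra (Qf F V) := ι (Qf F V) ((0 : V), α)

lemma Qf_apply (w : V × Module.Dual F V) : Qf F V w = w.2 w.1 := rfl

lemma vv_anticomm (v w : V) : ιv F V v * ιv F V w = -(ιv F V w * ιv F V v) :=
  CliffordAlgebra.ι_mul_ι_comm_of_isOrtho (by
    simp [QuadraticMap.IsOrtho, Qf_apply])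

lemma vd_comm (v : V) (α : Module.Dual F V) :
    ιv F V v * ιd F V α = algebraMap F _ (α v) - ιd F V α * ιv F V v := by
  have h := CliffordAlgebra.ι_mul_ι_comm (Q := Qf F V) (v, 0) ((0 : V), α)
  have hp : QuadraticMap.polar (Qf F V) (v, 0) ((0 : V), α) = α v := by
    simp [QuadraticMap.polar, Qf_apply, Prod.ext_iff]
  rw [hp] at h
  exact h

lemma vec_comm (v : V) (l : List V) :
    ιv F V v * (l.map (ιv F V)).prod =
      ((-1:F) ^ l.length) • ((l.map (ιv F V)).prod * ιv F V v) := by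
  induction l with
  | nil => simp
  | cons h t ih =>
    simp only [List.map_cons, List.prod_cons, List.length_cons]
    rw [← mul_assoc, vv_anticomm, neg_mul, mul_assoc, ih, pow_succ]
    rw [mul_smul_comm]
    simp only [mul_assoc, smul_smul]
    rw [mul_neg_one, neg_smul]

lemma vec_cov (v : V) : ∀ (m : ℕ) (β : Fin (m+1) → Module.Dual F V),
    ιv F V v * ((List.ofFn β).map (ιd F V)).prod =
      (∑ i : Fin (m+1), ((-1:F) ^ (i:ℕ) * β i v) •
        ((List.ofFn (β ∘ i.succAbove)).map (ιd F V)).prod)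
      + ((-1:F) ^ (m+1)) • (((List.ofFn β).map (ιd F V)).prod * ιv F V v) := by
  intro m
  induction m with
  | zero =>
    intro β
    simp only [List.ofFn_succ, List.ofFn_zero, List.map_cons, List.map_nil, List.prod_cons,
      List.prod_nil, mul_one, Fin.sum_univ_one, pow_zero, pow_one, one_mul, Fin.val_zero,
      neg_smul, one_smul]
    rw [vd_comm, Algebra.algebraMap_eq_smul_one, sub_eq_add_neg]
    simp
  | succ m ih =>
    intro β
    have helper : ∀ j : Fin (m+1), List.ofFn (β ∘ j.succ.succAbove) =
        β 0 :: List.ofFn ((fun i => β i.succ) ∘ j.succAbove) := by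
      intro j
      rw [List.ofFn_succ]
      refine congrArg₂ List.cons (by simp) (congrArg List.ofFn (funext fun a => ?_))
      simp [Fin.succ_succAbove_succ]
    rw [List.ofFn_succ]
    simp only [List.map_cons, List.prod_cons]
    rw [← mul_assoc, vd_comm, sub_mul, Algebra.algebraMap_eq_smul_one, smul_mul_assoc, one_mul,
      mul_assoc, ih (fun i => β i.succ)]
    conv_rhs => rw [Fin.sum_univ_succ]
    simp only [helper, List.map_cons, List.prod_cons, Fin.succAbove_zero, Fin.val_zero, pow_zero,
      one_mul, Fin.val_succ, pow_succ, mul_add, Finset.mul_sum, mul_smul_comm]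
    simp only [mul_neg_one, neg_neg, neg_mul, neg_smul, mul_assoc, Function.comp_def,
      Finset.sum_neg_distrib]
    abel

lemma vec_comm' (v : V) (l : List V) (y : CliffordAlgebra (Qf F V)) :
    ιv F V v * ((l.map (ιv F V)).prod * y) =
      ((-1:F) ^ l.length) • ((l.map (ιv F V)).prod * (ιv F V v * y)) := by
  rw [← mul_assoc, vec_comm, smul_mul_assoc, mul_assoc]

lemma vec_cov' (v : V) (m : ℕ) (β : Fin (m+1) → Module.Dual F V)
    (y : CliffordAlgebra (Qf F V)) :
    ιv F V v * (((List.ofFn β).map (ιd F V)).prod * y) =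
      (∑ i : Fin (m+1), ((-1:F) ^ (i:ℕ) * β i v) •
        (((List.ofFn (β ∘ i.succAbove)).map (ιd F V)).prod * y))
      + ((-1:F) ^ (m+1)) • (((List.ofFn β).map (ιd F V)).prod * (ιv F V v * y)) := by
  rw [← mul_assoc, vec_cov, add_mul, smul_mul_assoc, mul_assoc, Finset.sum_mul]
  simp only [smul_mul_assoc, mul_assoc]

variable {n : ℕ} (bV : Module.Basis (Fin n) F V)


/-- The fundamental idempotent `P = N̄₁⋯N̄ₙ` with `N̄ⱼ = (eⱼ)(eʲ)`. -/
def Pel : CliffordAlgebra (Qf F V) :=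
  (List.ofFn fun j : Fin n => ιv F V (bV j) * ιd F V (bV.coord j)).prod

variable (P : CliffordAlgebra (Qf F V))

lemma key (hP2 : P * P = P) (hPd : ∀ ρ : Module.Dual F V, P * ιd F V ρ = 0)
    (hvP : ∀ v : V, ιv F V v * P = 0) :
    ∀ (q : ℕ) (w : Fin q → V),
      (∀ (m : ℕ) (β : Fin m → Module.Dual F V) (y : CliffordAlgebra (Qf F V)), q ≠ m →
        P * (((List.ofFn w).reverse.map (ιv F V)).prod *
          (((List.ofFn β).map (ιd F V)).prod * (P * y))) = 0) ∧
      (∀ (β : Fin q → Module.Dual F V) (y : CliffordAlgebra (Qf F V)),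
        P * (((List.ofFn w).reverse.map (ιv F V)).prod *
          (((List.ofFn β).map (ιd F V)).prod * (P * y))) =
        (Matrix.of fun a b => β a (w b)).det • (P * y)) := by
  intro q
  induction q with
  | zero =>
    intro w
    constructor
    · rintro (_|m) β y hm
      · exact absurd rfl hm
      · rw [List.ofFn_succ]
        simp only [List.ofFn_zero, List.reverse_nil, List.map_nil, List.prod_nil, one_mul,
          List.map_cons, List.prod_cons, mul_assoc]
        rw [← mul_assoc P, hPd, zero_mul]
    · intro β y
      simp only [List.ofFn_zero, List.reverse_nil, List.map_nil, List.prod_nil, one_mul,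
        Matrix.det_fin_zero, one_smul, ← mul_assoc, hP2]
  | succ q ih =>
    intro w
    have hvecs : (List.ofFn w).reverse.map (ιv F V) =
        ιv F V (w (Fin.last q)) ::
          ((List.ofFn fun i => w (Fin.castSucc i)).reverse.map (ιv F V)) := by
      rw [List.ofFn_succ', List.concat_eq_append, List.reverse_append]
      simp
    have red : ∀ (m : ℕ) (β : Fin (m+1) → Module.Dual F V) (y : CliffordAlgebra (Qf F V)),
        P * (((List.ofFn w).reverse.map (ιv F V)).prod *
          (((List.ofFn β).map (ιd F V)).prod * (P * y))) =
        ∑ i : Fin (m+1), ((-1:F)^q * ((-1:F)^(i:ℕ) * β i (w (Fin.last q)))) •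
          (P * (((List.ofFn fun j => w (Fin.castSucc j)).reverse.map (ιv F V)).prod *
            (((List.ofFn (β ∘ i.succAbove)).map (ιd F V)).prod * (P * y)))) := by
      intro m β y
      have h0 : ιv F V (w (Fin.last q)) * (P * y) = 0 := by
        rw [← mul_assoc, hvP, zero_mul]
      rw [hvecs, List.prod_cons, mul_assoc, vec_comm', vec_cov', h0]
      simp only [mul_zero, smul_zero, add_zero, List.length_reverse, List.length_ofFn,
        Finset.mul_sum, mul_smul_comm, Finset.smul_sum, smul_smul]
    constructor
    · rintro (_|m) β y hm
      · have h0 : ιv F V (w (Fin.last q)) * (P * y) = 0 := by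
          rw [← mul_assoc, hvP, zero_mul]
        rw [hvecs, List.prod_cons, mul_assoc]
        simp only [List.ofFn_zero, List.map_nil, List.prod_nil, one_mul]
        rw [vec_comm', h0]
        simp
      · rw [red m β y]
        refine Finset.sum_eq_zero fun i _ => ?_
        rw [(ih (fun j => w (Fin.castSucc j))).1 m (β ∘ i.succAbove) y
          (fun h => hm (by rw [h])), smul_zero]
    · intro β y
      rw [red q β y]
      calc ∑ i : Fin (q+1), ((-1:F)^q * ((-1:F)^(i:ℕ) * β i (w (Fin.last q)))) •
            (P * (((List.ofFn fun j => w (Fin.castSucc j)).reverse.map (ιv F V)).prod *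
              (((List.ofFn (β ∘ i.succAbove)).map (ιd F V)).prod * (P * y))))
          = ∑ i : Fin (q+1), (((-1:F)^q * ((-1:F)^(i:ℕ) * β i (w (Fin.last q)))) *
              (Matrix.of fun a b =>
                (β ∘ i.succAbove) a (w (Fin.castSucc b))).det) • (P * y) := by
            refine Finset.sum_congr rfl fun i _ => ?_
            rw [(ih (fun j => w (Fin.castSucc j))).2 (β ∘ i.succAbove) y, smul_smul]
        _ = (Matrix.of fun a b => β a (w b)).det • (P * y) := by
            rw [← Finset.sum_smul]
            congr 1
            rw [Matrix.det_succ_column (Matrix.of fun a b => β a (w b)) (Fin.last q)]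
            refine Finset.sum_congr rfl fun i _ => ?_
            have hsub : (Matrix.of fun a b => β a (w b)).submatrix i.succAbove
                (Fin.last q).succAbove =
                Matrix.of fun a b => (β ∘ i.succAbove) a (w (Fin.castSucc b)) := by
              rw [Fin.succAbove_last]
              rfl
            rw [hsub]
            simp only [Matrix.of_apply, Fin.val_last]
            ring

lemma listv_eq {q : ℕ} (K : Fin q → Fin n) :
    ((List.ofFn fun b => bV (K b)).reverse.map (ιv F V)).prod =
      (List.ofFn fun b => ιv F V (bV (K b))).reverse.prod := by
  rw [List.map_reverse, List.map_ofFn]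
  rfl

lemma listd_eq {p : ℕ} (J : Fin p → Fin n) :
    ((List.ofFn fun a => bV.coord (J a)).map (ιd F V)).prod =
      (List.ofFn fun a => ιd F V (bV.coord (J a))).prod := by
  rw [List.map_ofFn]
  rfl



/-- The basis element `⁽ʲ¹⋯ʲᵖ⁾P₍k_q⋯k₁₎ = (e^{j₁})⋯(e^{j_p}) P (e_{k_q})⋯(e_{k₁})`,
where `J = (j₁,…,j_p)` and `K = (k₁,…,k_q)`. -/
def GP {p q : ℕ} (J : Fin p → Fin n) (K : Fin q → Fin n) :
    CliffordAlgebra (Qf F V) :=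
  (List.ofFn fun a => ιd F V (bV.coord (J a))).prod * P *
    (List.ofFn fun b => ιv F V (bV (K b))).reverse.prod

/-- the multiplication rule
`(⁽ᴶ⁾P₍K₎)(⁽ᴶ'⁾P₍K'₎) = δ_{q,p'} δ^{J'}_{K} (⁽ᴶ⁾P₍K'₎)`, where `δ^{J'}_{K}` is
the generalized Kronecker delta. -/
theorem stmt17
    (hP2 : P * P = P)
    (hPd : ∀ ρ : Module.Dual F V, P * ιd F V ρ = 0)
    (hvP : ∀ v : V, ιv F V v * P = 0)
    {p q q' : ℕ} (J : Fin p → Fin n) (K : Fin q → Fin n) (K' : Fin q' → Fin n) :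
    (∀ {p' : ℕ} (J' : Fin p' → Fin n), q ≠ p' →
      GP F V bV P J K * GP F V bV P J' K' = 0) ∧
    (∀ J' : Fin q → Fin n,
      GP F V bV P J K * GP F V bV P J' K' =
        (Matrix.of fun a b : Fin q =>
          if J' a = K b then (1 : F) else 0).det • GP F V bV P J K') := by
  obtain ⟨ka, kb⟩ := key F V P hP2 hPd hvP q (fun b => bV (K b))
  constructor
  · intro p' J' hq
    have h := ka p' (fun a => bV.coord (J' a))
      ((List.ofFn fun b => ιv F V (bV (K' b))).reverse.prod) hq
    rw [listv_eq, listd_eq] at h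
    simp only [GP, mul_assoc]
    rw [h, mul_zero]
  · intro J'
    have h := kb (fun a => bV.coord (J' a))
      ((List.ofFn fun b => ιv F V (bV (K' b))).reverse.prod)
    rw [listv_eq, listd_eq] at h
    have hM : (Matrix.of fun a b : Fin q => (bV.coord (J' a)) (bV (K b))) =
        Matrix.of fun a b : Fin q => if J' a = K b then (1 : F) else 0 := by
      ext a b
      simp only [Matrix.of_apply, Module.Basis.coord_apply, Module.Basis.repr_self, Finsupp.single_apply]
      exact if_congr eq_comm rfl rfl
    rw [hM] at h
    simp only [GP, mul_assoc]
    rw [h]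
    simp only [mul_smul_comm]
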